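/- arXiv:1104.3964 — 5 statements merged into one kernel-verified Lean document; each statement's English description precedes it below -/
import Mathlib

section
/- The series ∑_{x=1}^∞ [ (1/x² + 2·ln x / x) − ln(x·(x+1))·ln((x+1)/x) ] converges (its sum is denoted γ₂ ≈ 1.49930237…). -/
open Real


lemma gamma_two_bounds (n : ℝ) (hn : 1 ≤ n) :
    0 ≤ 1 / n ^ 2 + 2 * Real.log n / n - Real.log (n * (n + 1)) * Real.log ((n + 1) / n) ∧
    1 / n ^ 2 + 2 * Real.log n / n - Real.log (n * (n + 1)) * Real.log ((n + 1) / n)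
      ≤ 6 * Real.sqrt n / n ^ 2 := by
  have hn0 : (0:ℝ) < n := by linarith
  have hn1 : (0:ℝ) < n + 1 := by linarith
  set a := Real.log n with ha_def
  set b := Real.log (n + 1) with hb_def
  have hmul : Real.log (n * (n + 1)) = a + b := Real.log_mul (by positivity) (by positivity)
  have hdiv : Real.log ((n + 1) / n) = b - a := Real.log_div (by positivity) (by positivity)
  rw [hmul, hdiv]
  have ha0 : 0 ≤ a := Real.log_nonneg hn
  have hL0 : 0 ≤ b - a := by
    rw [← hdiv]; exact Real.log_nonneg (by rw [le_div_iff₀ hn0]; linarith)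
  have hLle : b - a ≤ 1 / n := by
    have h := Real.log_le_sub_one_of_pos (show (0:ℝ) < (n+1)/n by positivity)
    rw [hdiv] at h
    have h2 : (n+1)/n - 1 = 1/n := by field_simp; ring
    linarith
  have hLge : 1 / (n + 1) ≤ b - a := by
    have h := Real.log_le_sub_one_of_pos (show (0:ℝ) < n/(n+1) by positivity)
    have hd : Real.log (n / (n+1)) = a - b := Real.log_div (by positivity) (by positivity)
    rw [hd] at h
    have h2 : n/(n+1) - 1 = -(1/(n+1)) := by field_simp; ring
    rw [h2] at h
    linarith
  have h0 : 0 ≤ 1 / n - (b - a) := by linarith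
  have hsub : 1 / n - (b - a) ≤ 1 / n ^ 2 := by
    have h1 : 1/n - 1/(n+1) = 1/(n*(n+1)) := by field_simp; ring
    have h2 : 1/(n*(n+1)) ≤ 1/n^2 := by
      apply one_div_le_one_div_of_le (by positivity)
      nlinarith
    linarith
  have hs0 : 0 < Real.sqrt n := Real.sqrt_pos.2 hn0
  have hs1 : 1 ≤ Real.sqrt n := Real.one_le_sqrt.2 hn
  have hsq : Real.sqrt n ^ 2 = n := Real.sq_sqrt hn0.le
  have hale : a ≤ 2 * Real.sqrt n := by
    have h := Real.log_le_sub_one_of_pos hs0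
    have h2 : Real.log (Real.sqrt n) = a / 2 := Real.log_sqrt hn0.le
    linarith
  have e1 : 1/n^2 + 2*a/n - (a+b)*(b-a)
      = (1/n - (b-a))*(1/n + (b-a)) + 2*(a*(1/n - (b-a))) := by ring
  constructor
  · rw [e1]
    have := mul_nonneg h0 (by positivity : (0:ℝ) ≤ 1/n + (b-a))
    have := mul_nonneg ha0 h0
    linarith
  · rw [e1]
    have h1 : (1/n - (b-a))*(1/n + (b-a)) ≤ (1/n^2) * (2/n) := by
      have h2n : 1/n + (b-a) ≤ 2/n := by
        rw [show (2:ℝ)/n = 1/n + 1/n by ring]; linarith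
      apply mul_le_mul hsub h2n (by positivity) (by positivity)
    have h2 : a*(1/n - (b-a)) ≤ (2*Real.sqrt n) * (1/n^2) := by
      apply mul_le_mul hale hsub h0 (by positivity)
    have h3 : (1/n^2) * (2/n) ≤ 2*Real.sqrt n/n^2 := by
      rw [show (1:ℝ)/n^2 * (2/n) = 2/(n^2*n) by ring,
        div_le_div_iff₀ (by positivity) (by positivity)]
      nlinarith [mul_pos hn0 hn0, mul_pos (mul_pos hn0 hn0) hn0, sq_nonneg (n-1)]
    have h4 : (2*Real.sqrt n) * (1/n^2) = 2*Real.sqrt n/n^2 := by ring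
    rw [h4] at h2
    have h6 : 2*Real.sqrt n/n^2 + 2*(2*Real.sqrt n/n^2) = 6*Real.sqrt n/n^2 := by ring
    linarith

/-- The series ∑_{x=1}^∞ [(1/x² + 2 ln x / x) − ln(x(x+1))·ln((x+1)/x)] converges;
its sum is γ₂. -/
theorem summable_gamma_two :
    Summable (fun x : ℕ =>
      (1 / ((x : ℝ) + 1) ^ 2 + 2 * Real.log ((x : ℝ) + 1) / ((x : ℝ) + 1)) -
        Real.log (((x : ℝ) + 1) * ((x : ℝ) + 2)) *
          Real.log (((x : ℝ) + 2) / ((x : ℝ) + 1))) := by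
  have key : ∀ x : ℕ,
      0 ≤ (1 / ((x : ℝ) + 1) ^ 2 + 2 * Real.log ((x : ℝ) + 1) / ((x : ℝ) + 1)) -
        Real.log (((x : ℝ) + 1) * ((x : ℝ) + 2)) *
          Real.log (((x : ℝ) + 2) / ((x : ℝ) + 1)) ∧
      (1 / ((x : ℝ) + 1) ^ 2 + 2 * Real.log ((x : ℝ) + 1) / ((x : ℝ) + 1)) -
        Real.log (((x : ℝ) + 1) * ((x : ℝ) + 2)) *
          Real.log (((x : ℝ) + 2) / ((x : ℝ) + 1))
        ≤ 6 * ((x : ℝ) + 1) ^ (-(3/2) : ℝ) := by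
    intro x
    have hx1 : (1:ℝ) ≤ (x:ℝ) + 1 := by have := Nat.cast_nonneg (α := ℝ) x; linarith
    have h := gamma_two_bounds ((x:ℝ) + 1) hx1
    have e2 : ((x:ℝ) + 1) + 1 = (x:ℝ) + 2 := by ring
    rw [e2] at h
    have hpos : (0:ℝ) < (x:ℝ) + 1 := by positivity
    have heq : 6 * Real.sqrt ((x:ℝ)+1) / ((x:ℝ)+1)^2 = 6 * ((x:ℝ)+1) ^ (-(3/2) : ℝ) := by
      rw [Real.sqrt_eq_rpow, mul_div_assoc, ← Real.rpow_natCast ((x:ℝ)+1) 2,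
        ← Real.rpow_sub hpos]
      norm_num
    rw [heq] at h
    constructor
    · linarith [h.1]
    · linarith [h.2]
  have hsum : Summable (fun x : ℕ => 6 * ((x : ℝ) + 1) ^ (-(3/2) : ℝ)) := by
    have h1 : Summable (fun n : ℕ => (n : ℝ) ^ (-(3/2) : ℝ)) :=
      (Real.summable_nat_rpow (p := -(3/2))).2 (by norm_num)
    have h2 := (summable_nat_add_iff 1).2 h1
    have h3 : Summable (fun x : ℕ => ((x : ℝ) + 1) ^ (-(3/2) : ℝ)) := by
      convert h2 using 2 with x
      · rfl
      · push_cast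
        ring_nf
    exact h3.mul_left 6
  exact Summable.of_nonneg_of_le (fun x => (key x).1) (fun x => (key x).2) hsum
end

section
/- Let γ₂′ = ∑_{x=2}^∞ [ ln(x·(x−1))·ln(x/(x−1)) − (2·ln x / x − 1/x²) ]. Then the sequence n ↦ (ln n)² − 2·(∑_{x=2}^n ln x / x) + (∑_{x=2}^n 1/x²) converges to γ₂′ as n → ∞. -/
open Real Filter

set_option maxHeartbeats 1000000 in
private noncomputable def fγ (x : ℕ) : ℝ :=
  Real.log (((x:ℝ)+2) * ((x:ℝ)+1)) * Real.log (((x:ℝ)+2)/((x:ℝ)+1)) -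
    (2 * Real.log ((x:ℝ)+2) / ((x:ℝ)+2) - 1/((x:ℝ)+2)^2)

set_option maxHeartbeats 1000000 in
private lemma fγ_bound (x : ℕ) : |fγ x| ≤ 16 / (((x:ℝ)+2) * Real.sqrt ((x:ℝ)+2)) := by
  set a : ℝ := (x:ℝ)+2 with ha_def
  set b : ℝ := (x:ℝ)+1 with hb_def
  have hx0 : (0:ℝ) ≤ (x:ℝ) := Nat.cast_nonneg x
  have ha : 2 ≤ a := by rw [ha_def]; linarith
  have hb : 1 ≤ b := by rw [hb_def]; linarith
  have ha0 : 0 < a := by linarith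
  have hb0 : 0 < b := by linarith
  have hab : a = b + 1 := by rw [ha_def, hb_def]; ring
  set L := Real.log a with hL_def
  set M := Real.log b with hM_def
  set d := L - M with hd_def
  have hd1 : 1/a ≤ d := by
    have h := Real.log_le_sub_one_of_pos (x := b/a) (by positivity)
    rw [Real.log_div (by linarith) (by linarith)] at h
    have e : b/a - 1 = -(1/a) := by field_simp; linarith
    rw [e] at h
    linarith [h]
  have hd2 : d ≤ 1/b := by
    have h := Real.log_le_sub_one_of_pos (x := a/b) (by positivity)
    rw [Real.log_div (by linarith) (by linarith)] at h
    have e : a/b - 1 = 1/b := by field_simp; linarith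
    linarith [h, e]
  have hs : Real.sqrt a * Real.sqrt a = a := Real.mul_self_sqrt (le_of_lt ha0)
  have hs1 : 1 ≤ Real.sqrt a := by nlinarith [Real.sqrt_nonneg a]
  have hL2 : L ≤ 2 * Real.sqrt a := by
    have h := Real.log_le_sub_one_of_pos (x := Real.sqrt a) (by positivity)
    have hlog : L = 2 * Real.log (Real.sqrt a) := by
      rw [hL_def, Real.log_sqrt (le_of_lt ha0)]; ring
    rw [hlog]; nlinarith
  have hL0 : 0 ≤ L := Real.log_nonneg (by linarith)
  have hfeq : fγ x = 2*L*(d - 1/a) - (d - 1/a)*(d + 1/a) := by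
    unfold fγ
    rw [← ha_def, ← hb_def, Real.log_mul (ne_of_gt ha0) (ne_of_gt hb0),
      Real.log_div (ne_of_gt ha0) (ne_of_gt hb0), ← hL_def, ← hM_def, ← hd_def]
    field_simp
    ring
  have hba : a/2 ≤ b := by linarith
  have h1 : 0 ≤ d - 1/a := by linarith
  have h2 : d - 1/a ≤ 1/(a*b) := by
    have e : 1/b - 1/a = 1/(a*b) := by field_simp; ring
    linarith [hd2, e]
  have h3 : d + 1/a ≤ 2/b := by
    have e1 : 1/a ≤ 1/b := by
      apply one_div_le_one_div_of_le hb0; linarith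
    have e2 : 2/b = 1/b + 1/b := by ring
    linarith
  have h4 : 0 ≤ d + 1/a := by
    have := one_div_pos.mpr ha0; linarith
  rw [hfeq]
  have hsqa : 0 < Real.sqrt a := by linarith
  have key1 : 2*L*(d-1/a) ≤ 8/(a*Real.sqrt a) := by
    have t : 2*L*(d-1/a) ≤ 2*(2*Real.sqrt a)*(1/(a*b)) := by
      apply mul_le_mul (by nlinarith) h2 h1 (by positivity)
    have e : 2*(2*Real.sqrt a)*(1/(a*b)) = (4*Real.sqrt a)/(a*b) := by ring
    rw [e] at t
    have h5 : (4*Real.sqrt a)/(a*b) ≤ 8/(a*Real.sqrt a) := by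
      rw [div_le_div_iff₀ (by positivity) (by positivity)]
      nlinarith [mul_pos ha0 hb0]
    linarith
  have key2 : (d-1/a)*(d+1/a) ≤ 8/(a*Real.sqrt a) := by
    have t : (d-1/a)*(d+1/a) ≤ (1/(a*b))*(2/b) := mul_le_mul h2 h3 h4 (by positivity)
    have e : (1/(a*b))*(2/b) = 2/(a*b*b) := by field_simp
    rw [e] at t
    have hsa : Real.sqrt a ≤ a := by nlinarith
    have h6 : 2/(a*b*b) ≤ 8/(a*Real.sqrt a) := by
      rw [div_le_div_iff₀ (by positivity) (by positivity)]
      nlinarith [mul_pos ha0 hb0, mul_pos (mul_pos ha0 hb0) hb0]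
    linarith
  have hnn1 : 0 ≤ 2*L*(d-1/a) := by positivity
  have hnn2 : 0 ≤ (d-1/a)*(d+1/a) := mul_nonneg h1 h4
  have h8 : 16/(a*Real.sqrt a) = 2 * (8/(a*Real.sqrt a)) := by ring
  have h9 : 0 < 8/(a*Real.sqrt a) := by positivity
  rw [abs_le]
  constructor <;> linarith

private lemma cube_rpow (c : ℝ) (hc : 0 < c) : c ^ (3/2 : ℝ) = c * Real.sqrt c := by
  rw [Real.sqrt_eq_rpow, show (3/2:ℝ) = 1 + 1/2 by norm_num, Real.rpow_add hc, Real.rpow_one]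

private lemma summable_bound :
    Summable (fun x : ℕ => 16 / (((x:ℝ)+2) * Real.sqrt ((x:ℝ)+2))) := by
  have h : Summable (fun n : ℕ => 16 * (1/(n:ℝ)^(3/2:ℝ))) :=
    (Real.summable_one_div_nat_rpow.mpr (by norm_num)).mul_left 16
  have h2 := h.comp_injective (add_left_injective 2)
  refine h2.congr fun x => ?_
  have hc : (0:ℝ) < (x:ℝ)+2 := by positivity
  simp only [Function.comp]
  rw [show ((x+2 : ℕ):ℝ) = (x:ℝ)+2 by push_cast; ring, cube_rpow _ hc]
  field_simp

private lemma summable_fγ : Summable fγ :=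
  (Summable.of_nonneg_of_le (fun n => abs_nonneg _) fγ_bound summable_bound).of_abs

private lemma sum_fγ (m : ℕ) :
    ∑ x ∈ Finset.range m, fγ x =
      (Real.log ((m:ℝ)+1))^2 - 2 * (∑ x ∈ Finset.range m, Real.log ((x:ℝ)+2)/((x:ℝ)+2)) +
        ∑ x ∈ Finset.range m, 1/((x:ℝ)+2)^2 := by
  have key : ∀ x : ℕ, fγ x =
      ((Real.log ((x:ℝ)+1+1))^2 - (Real.log ((x:ℝ)+1))^2) -
        (2 * Real.log ((x:ℝ)+2)/((x:ℝ)+2)) + 1/((x:ℝ)+2)^2 := by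
    intro x
    unfold fγ
    have ha0 : (0:ℝ) < (x:ℝ)+2 := by positivity
    have hb0 : (0:ℝ) < (x:ℝ)+1 := by positivity
    rw [Real.log_mul (ne_of_gt ha0) (ne_of_gt hb0), Real.log_div (ne_of_gt ha0) (ne_of_gt hb0)]
    ring_nf
  rw [Finset.sum_congr rfl (fun x _ => key x)]
  rw [Finset.sum_add_distrib, Finset.sum_sub_distrib]
  have tel : ∑ x ∈ Finset.range m, ((Real.log ((x:ℝ)+1+1))^2 - (Real.log ((x:ℝ)+1))^2)
      = (Real.log ((m:ℝ)+1))^2 := by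
    have := Finset.sum_range_sub (fun k : ℕ => (Real.log ((k:ℝ)+1))^2) m
    simpa using this
  rw [tel, Finset.mul_sum]
  congr 1
  congr 1
  apply Finset.sum_congr rfl
  intro x _
  ring

/-- With γ₂′ the sum of the backward errors for F(x) = (ln x)², the sequence
(ln n)² − 2 ∑_{x=2}^n ln x / x + ∑_{x=2}^n 1/x² tends to γ₂′. -/
theorem tendsto_partial_sums_to_gamma_two_prime (γ₂' : ℝ)
    (hγ₂' : γ₂' = ∑' x : ℕ,
      (Real.log (((x : ℝ) + 2) * ((x : ℝ) + 1)) *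
          Real.log (((x : ℝ) + 2) / ((x : ℝ) + 1)) -
        (2 * Real.log ((x : ℝ) + 2) / ((x : ℝ) + 2) - 1 / ((x : ℝ) + 2) ^ 2))) :
    Tendsto (fun n : ℕ =>
        (Real.log (n : ℝ)) ^ 2 - 2 * (∑ x ∈ Finset.Icc 2 n, Real.log (x : ℝ) / (x : ℝ)) +
          (∑ x ∈ Finset.Icc 2 n, 1 / (x : ℝ) ^ 2))
      atTop (nhds γ₂') := by
  have hγ : γ₂' = ∑' x : ℕ, fγ x := hγ₂'
  have htend : Tendsto (fun m : ℕ => ∑ x ∈ Finset.range m, fγ x) atTop (nhds γ₂') := by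
    rw [hγ]
    exact summable_fγ.hasSum.tendsto_sum_nat
  have htend2 : Tendsto (fun n : ℕ => ∑ x ∈ Finset.range (n-1), fγ x) atTop (nhds γ₂') :=
    htend.comp (tendsto_sub_atTop_nat 1)
  refine htend2.congr' ?_
  filter_upwards [eventually_ge_atTop 1] with n hn
  obtain ⟨m, rfl⟩ : ∃ m, n = m + 1 := ⟨n - 1, (Nat.succ_pred_eq_of_pos hn).symm⟩
  have hm : m + 1 - 1 = m := rfl
  rw [hm, sum_fγ m]
  have hIcc : ∀ g : ℕ → ℝ, ∑ x ∈ Finset.Icc 2 (m+1), g x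
      = ∑ x ∈ Finset.range m, g (x+2) := by
    intro g
    rw [← Finset.Ico_add_one_right_eq_Icc, Finset.sum_Ico_eq_sum_range,
      show m+1+1-2 = m from rfl]
    exact Finset.sum_congr rfl fun x _ => by rw [add_comm]
  rw [hIcc (fun x => Real.log (x:ℝ) / (x:ℝ)), hIcc (fun x => 1 / (x:ℝ)^2)]
  have c2 : ∀ x:ℕ, ((x+2:ℕ):ℝ) = (x:ℝ)+2 := fun x => by push_cast; ring
  have e1 : ∑ x ∈ Finset.range m, Real.log ((x+2:ℕ):ℝ) / ((x+2:ℕ):ℝ)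
      = ∑ x ∈ Finset.range m, Real.log ((x:ℝ)+2) / ((x:ℝ)+2) :=
    Finset.sum_congr rfl fun x _ => by rw [c2]
  have e2 : ∑ x ∈ Finset.range m, 1 / ((x+2:ℕ):ℝ)^2
      = ∑ x ∈ Finset.range m, 1 / ((x:ℝ)+2)^2 :=
    Finset.sum_congr rfl fun x _ => by rw [c2]
  rw [e1, e2, show ((m+1:ℕ):ℝ) = (m:ℝ)+1 from by push_cast; ring]
end

section
/- With γ₂ = ∑_{x=1}^∞ [ (1/x² + 2·ln x / x) − ln(x·(x+1))·ln((x+1)/x) ] and γ₂′ = ∑_{x=2}^∞ [ ln(x·(x−1))·ln(x/(x−1)) − (2·ln x / x − 1/x²) ], one has γ₂ + γ₂′ = 2·(∑_{x=1}^∞ 1/x²) − 1. -/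
open Real Filter

lemma keyBound (X u v s : ℝ) (hX : 1 ≤ X) (hs : s * s = X) (hs1 : 1 ≤ s)
    (hu : 0 ≤ u) (huv : u ≤ v) (hv : v ≤ 3 * s)
    (h1 : 1/(X+1) ≤ v - u) (h2 : v - u ≤ 1/X) :
    |2 * u / X - (u + v) * (v - u)| ≤ 6 / (X * s) ∧
    |(u + v) * (v - u) - 2 * v / (X+1)| ≤ 6 / (X * s) := by
  have hX0 : (0:ℝ) < X := by linarith
  have hX1 : (0:ℝ) < X + 1 := by linarith
  have hs0 : (0:ℝ) < s := by linarith
  have hXs : (0:ℝ) < X * s := by positivity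
  have hv0 : 0 ≤ v := le_trans hu huv
  have e1 : (2*u) * (1/(X+1)) ≤ (u+v) * (v-u) :=
    mul_le_mul (by linarith) h1 (by positivity) (by linarith)
  have e2 : (u+v) * (v-u) ≤ (u+v) * (1/X) :=
    mul_le_mul_of_nonneg_left h2 (by linarith)
  constructor
  · rw [abs_le]
    constructor
    · have e3 : (u+v) * (1/X) ≤ 2*u/X + (1/X)*(1/X) := by
        have h : (u+v) * (1/X) = 2*u/X + (v-u)*(1/X) := by ring
        rw [h]
        have : (v-u)*(1/X) ≤ (1/X)*(1/X) :=
          mul_le_mul_of_nonneg_right h2 (by positivity)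
        linarith
      have e4 : (1/X)*(1/X) ≤ 6/(X*s) := by
        have h : (1/X)*(1/X) = 1/(X*X) := by field_simp
        rw [h, div_le_div_iff₀ (by positivity) hXs]
        nlinarith
      linarith
    · have e5 : 2*u/X - (2*u)*(1/(X+1)) ≤ 6/(X*s) := by
        have heq : 2*u/X - (2*u)*(1/(X+1)) = (2*u)/(X*(X+1)) := by
          field_simp; ring
        rw [heq, div_le_div_iff₀ (by positivity) hXs]
        nlinarith
      linarith
  · rw [abs_le]
    constructor
    · have e6 : 2*v/(X+1) - (2*u)*(1/(X+1)) ≤ 6/(X*s) := by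
        have heq : 2*v/(X+1) - (2*u)*(1/(X+1)) = (2*(v-u))/(X+1) := by
          field_simp
        rw [heq, div_le_div_iff₀ hX1 hXs]
        have h2' : (v - u) * X ≤ 1 := by
          have := mul_le_mul_of_nonneg_right h2 hX0.le
          rw [div_mul_cancel₀] at this
          · linarith
          · positivity
        nlinarith
      linarith
    · have e7 : (u+v)*(1/X) ≤ 2*v/X := by
        have h : 2*v/X = (2*v)*(1/X) := by ring
        rw [h]
        exact mul_le_mul_of_nonneg_right (by linarith) (by positivity)
      have e8 : 2*v/X - 2*v/(X+1) ≤ 6/(X*s) := by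
        have heq : 2*v/X - 2*v/(X+1) = (2*v)/(X*(X+1)) := by
          field_simp; ring
        rw [heq, div_le_div_iff₀ (by positivity) hXs]
        nlinarith
      linarith

lemma log_facts (X : ℝ) (hX : 1 ≤ X) :
    0 ≤ log X ∧ log X ≤ log (X+1) ∧ log (X+1) ≤ 3 * Real.sqrt X ∧
      1/(X+1) ≤ log (X+1) - log X ∧ log (X+1) - log X ≤ 1/X := by
  have hX0 : (0:ℝ) < X := by linarith
  have hX1 : (0:ℝ) < X + 1 := by linarith
  have hs : Real.sqrt X * Real.sqrt X = X := Real.mul_self_sqrt hX0.le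
  have hs1 : 1 ≤ Real.sqrt X := by
    nlinarith [Real.sqrt_nonneg X]
  refine ⟨Real.log_nonneg hX, Real.log_le_log hX0 (by linarith), ?_, ?_, ?_⟩
  · have h1 : Real.log (X+1) = 2 * Real.log (Real.sqrt (X+1)) := by
      rw [Real.log_sqrt hX1.le]; ring
    have h2 : Real.log (Real.sqrt (X+1)) ≤ Real.sqrt (X+1) - 1 :=
      Real.log_le_sub_one_of_pos (Real.sqrt_pos.mpr hX1)
    have h3 : Real.sqrt (X+1) ≤ Real.sqrt (2*X) := Real.sqrt_le_sqrt (by linarith)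
    have h4 : Real.sqrt (2*X) ≤ 3/2 * Real.sqrt X := by
      nlinarith [Real.sqrt_nonneg (2*X), Real.sqrt_nonneg X,
        Real.mul_self_sqrt (by linarith : (0:ℝ) ≤ 2*X)]
    linarith
  · have h1 : Real.log (X/(X+1)) ≤ X/(X+1) - 1 :=
      Real.log_le_sub_one_of_pos (by positivity)
    rw [Real.log_div (by linarith) (by linarith)] at h1
    have h : X/(X+1) - 1 = -(1/(X+1)) := by field_simp; ring
    linarith [h ▸ h1]
  · have h1 : Real.log ((X+1)/X) ≤ (X+1)/X - 1 :=
      Real.log_le_sub_one_of_pos (by positivity)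
    rw [Real.log_div (by linarith) (by linarith)] at h1
    have h : (X+1)/X - 1 = 1/X := by field_simp; ring
    linarith [h ▸ h1]

lemma summable_aux : Summable (fun x : ℕ => 6 / (((x:ℝ)+1) * Real.sqrt ((x:ℝ)+1))) := by
  have h0 : Summable (fun n : ℕ => 1 / (n:ℝ) ^ (3/2 : ℝ)) :=
    Real.summable_one_div_nat_rpow.mpr (by norm_num)
  have h1 : Summable (fun n : ℕ => 1 / ((n+1:ℕ):ℝ) ^ (3/2 : ℝ)) :=
    (summable_nat_add_iff 1).mpr h0
  have h2 : Summable (fun n : ℕ => 1 / (((n:ℝ)+1) * Real.sqrt ((n:ℝ)+1))) := by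
    refine h1.congr fun n => ?_
    have hp : (0:ℝ) < (n:ℝ)+1 := by positivity
    have h : ((n+1:ℕ):ℝ) ^ (3/2 : ℝ) = ((n:ℝ)+1) * Real.sqrt ((n:ℝ)+1) := by
      push_cast
      rw [Real.sqrt_eq_rpow, show (3/2:ℝ) = 1 + 1/2 by norm_num,
        Real.rpow_add hp, Real.rpow_one]
    rw [h]
  exact (h2.mul_left 6).congr fun n => by rw [mul_one_div]

/-- γ₂ + γ₂′ = 2·(∑_{x=1}^∞ 1/x²) − 1. -/
theorem gamma_two_add_gamma_two_prime (γ₂ γ₂' : ℝ)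
    (hγ₂ : γ₂ = ∑' x : ℕ,
      ((1 / ((x : ℝ) + 1) ^ 2 + 2 * Real.log ((x : ℝ) + 1) / ((x : ℝ) + 1)) -
        Real.log (((x : ℝ) + 1) * ((x : ℝ) + 2)) *
          Real.log (((x : ℝ) + 2) / ((x : ℝ) + 1))))
    (hγ₂' : γ₂' = ∑' x : ℕ,
      (Real.log (((x : ℝ) + 2) * ((x : ℝ) + 1)) *
          Real.log (((x : ℝ) + 2) / ((x : ℝ) + 1)) -
        (2 * Real.log ((x : ℝ) + 2) / ((x : ℝ) + 2) - 1 / ((x : ℝ) + 2) ^ 2))) :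
    γ₂ + γ₂' = 2 * (∑' x : ℕ, 1 / ((x : ℝ) + 1) ^ 2) - 1 := by
  set a : ℕ → ℝ := fun x =>
      ((1 / ((x : ℝ) + 1) ^ 2 + 2 * Real.log ((x : ℝ) + 1) / ((x : ℝ) + 1)) -
        Real.log (((x : ℝ) + 1) * ((x : ℝ) + 2)) *
          Real.log (((x : ℝ) + 2) / ((x : ℝ) + 1))) with ha_def
  set b : ℕ → ℝ := fun x =>
      (Real.log (((x : ℝ) + 2) * ((x : ℝ) + 1)) *
          Real.log (((x : ℝ) + 2) / ((x : ℝ) + 1)) -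
        (2 * Real.log ((x : ℝ) + 2) / ((x : ℝ) + 2) - 1 / ((x : ℝ) + 2) ^ 2)) with hb_def
  set p : ℕ → ℝ := fun x => 1 / ((x : ℝ) + 1) ^ 2 with hp_def
  set q : ℕ → ℝ := fun x => 1 / ((x : ℝ) + 2) ^ 2 with hq_def
  set f : ℕ → ℝ := fun x => 2 * Real.log ((x : ℝ) + 1) / ((x : ℝ) + 1) with hf_def
  -- pointwise bounds
  have hbound : ∀ x : ℕ, |a x - p x| ≤ 6 / (((x:ℝ)+1) * Real.sqrt ((x:ℝ)+1)) ∧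
      |b x - q x| ≤ 6 / (((x:ℝ)+1) * Real.sqrt ((x:ℝ)+1)) := by
    intro x
    have hxnn : (0:ℝ) ≤ (x:ℝ) := Nat.cast_nonneg x
    have hX : (1:ℝ) ≤ (x:ℝ) + 1 := by linarith
    have hX0 : (0:ℝ) < (x:ℝ) + 1 := by positivity
    obtain ⟨l1, l2, l3, l4, l5⟩ := log_facts ((x:ℝ)+1) hX
    rw [show ((x:ℝ)+1+1) = (x:ℝ)+2 from by ring] at l2 l3 l4 l5
    have hs : Real.sqrt ((x:ℝ)+1) * Real.sqrt ((x:ℝ)+1) = (x:ℝ)+1 :=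
      Real.mul_self_sqrt hX0.le
    have hs1 : 1 ≤ Real.sqrt ((x:ℝ)+1) := by nlinarith [Real.sqrt_nonneg ((x:ℝ)+1)]
    have key := keyBound ((x:ℝ)+1) (Real.log ((x:ℝ)+1)) (Real.log ((x:ℝ)+2))
      (Real.sqrt ((x:ℝ)+1)) hX hs hs1 l1 l2 l3 (by rw [show ((x:ℝ)+1+1) = (x:ℝ)+2 from by ring]; exact l4) l5
    have hlm : Real.log (((x:ℝ)+1) * ((x:ℝ)+2)) =
        Real.log ((x:ℝ)+1) + Real.log ((x:ℝ)+2) :=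
      Real.log_mul (by positivity) (by positivity)
    have hlm' : Real.log (((x:ℝ)+2) * ((x:ℝ)+1)) =
        Real.log ((x:ℝ)+1) + Real.log ((x:ℝ)+2) := by
      rw [mul_comm]; exact hlm
    have hld : Real.log (((x:ℝ)+2) / ((x:ℝ)+1)) =
        Real.log ((x:ℝ)+2) - Real.log ((x:ℝ)+1) :=
      Real.log_div (by positivity) (by positivity)
    constructor
    · have : a x - p x = 2 * Real.log ((x:ℝ)+1) / ((x:ℝ)+1) -
          (Real.log ((x:ℝ)+1) + Real.log ((x:ℝ)+2)) *
            (Real.log ((x:ℝ)+2) - Real.log ((x:ℝ)+1)) := by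
        simp only [ha_def, hp_def, hlm, hld]; ring
      rw [this]; exact key.1
    · have h21 : (x:ℝ)+1+1 = (x:ℝ)+2 := by ring
      have : b x - q x = (Real.log ((x:ℝ)+1) + Real.log ((x:ℝ)+2)) *
            (Real.log ((x:ℝ)+2) - Real.log ((x:ℝ)+1)) -
          2 * Real.log ((x:ℝ)+2) / ((x:ℝ)+2) := by
        simp only [hb_def, hq_def, hlm', hld]; ring
      rw [this]
      have := key.2
      rw [h21] at this
      exact this
  -- summability
  have hp : Summable p := by
    have h0 : Summable (fun n : ℕ => 1 / (n:ℝ) ^ 2) :=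
      Real.summable_one_div_nat_pow.mpr (by norm_num)
    have h1 := (summable_nat_add_iff 1).mpr h0
    exact h1.congr fun n => by push_cast; ring
  have hq : Summable q := by
    have h1 := (summable_nat_add_iff 1).mpr hp
    exact h1.congr fun n => by simp only [hp_def, hq_def]; push_cast; ring
  have hra : Summable (fun x => a x - p x) :=
    Summable.of_abs (summable_aux.of_nonneg_of_le (fun _ => abs_nonneg _)
      (fun x => (hbound x).1))
  have hrb : Summable (fun x => b x - q x) :=
    Summable.of_abs (summable_aux.of_nonneg_of_le (fun _ => abs_nonneg _)
      (fun x => (hbound x).2))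
  have ha : Summable a := (hra.add hp).congr fun x => by ring
  have hb : Summable b := (hrb.add hq).congr fun x => by ring
  -- telescoping part
  have ht_eq : ∀ x : ℕ, a x + b x - p x - q x = f x - f (x+1) := by
    intro x
    simp only [ha_def, hb_def, hp_def, hq_def, hf_def]
    push_cast
    rw [show ((x:ℝ)+2) * ((x:ℝ)+1) = ((x:ℝ)+1) * ((x:ℝ)+2) by ring]
    ring
  have ht : Summable (fun x => a x + b x - p x - q x) :=
    ((ha.add hb).sub hp).sub hq
  have hf0 : f 0 = 0 := by simp [hf_def]
  have hflim : Tendsto f atTop (nhds 0) := by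
    have hlog : Tendsto (fun y : ℝ => Real.log y / y) atTop (nhds 0) :=
      Real.isLittleO_log_id_atTop.tendsto_div_nhds_zero
    have hcast : Tendsto (fun n : ℕ => (n:ℝ) + 1) atTop atTop :=
      tendsto_atTop_add_const_right _ 1 tendsto_natCast_atTop_atTop
    have := (hlog.comp hcast).const_mul 2
    simp only [mul_zero] at this
    exact this.congr fun n => by simp [hf_def]; ring
  have htsum : ∑' x, (a x + b x - p x - q x) = 0 := by
    have h1 : Tendsto (fun N => ∑ i ∈ Finset.range N, (a i + b i - p i - q i))
        atTop (nhds (∑' x, (a x + b x - p x - q x))) := ht.hasSum.tendsto_sum_nat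
    have h2 : ∀ N, ∑ i ∈ Finset.range N, (a i + b i - p i - q i) = -f N := by
      intro N
      rw [show (fun i => a i + b i - p i - q i) = fun i => f i - f (i+1) from
        funext ht_eq]
      rw [Finset.sum_range_sub' f N, hf0, zero_sub]
    rw [funext h2] at h1
    have h3 : Tendsto (fun N : ℕ => -f N) atTop (nhds 0) := by
      simpa using hflim.neg
    exact tendsto_nhds_unique h1 h3
  -- tsum of q
  have hqsum : ∑' x, q x = (∑' x, p x) - 1 := by
    have h0 : ∑' n, p n = p 0 + ∑' n, p (n+1) := Summable.tsum_eq_zero_add hp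
    have h1 : ∑' n, p (n+1) = ∑' n, q n := by
      refine tsum_congr fun n => ?_
      simp only [hp_def, hq_def]; push_cast; ring_nf
    have hp0 : p 0 = 1 := by simp [hp_def]
    rw [h1, hp0] at h0
    linarith
  -- assemble
  rw [hγ₂, hγ₂', ← Summable.tsum_add ha hb]
  have hsplit : ∀ x : ℕ, a x + b x = (p x + q x) + (a x + b x - p x - q x) := by
    intro x; ring
  calc ∑' x, (a x + b x)
      = ∑' x, ((p x + q x) + (a x + b x - p x - q x)) := tsum_congr hsplit
    _ = (∑' x, (p x + q x)) + ∑' x, (a x + b x - p x - q x) :=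
        Summable.tsum_add (hp.add hq) ht
    _ = ((∑' x, p x) + ∑' x, q x) + 0 := by rw [Summable.tsum_add hp hq, htsum]
    _ = 2 * (∑' x, p x) - 1 := by rw [hqsum]; ring
end

section
/- With γ₂ = ∑_{x=1}^∞ [ (1/x² + 2·ln x / x) − ln(x·(x+1))·ln((x+1)/x) ] and γ₂′ = ∑_{x=2}^∞ [ ln(x·(x−1))·ln(x/(x−1)) − (2·ln x / x − 1/x²) ], one has γ₂ + γ₂′ = π²/3 − 1. -/
open Real Filter Finset Topology

private lemma lds_anti {s u : ℝ} (hs : 3 ≤ s) (hsu : s ≤ u) :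
    2 * Real.log u / u ≤ 2 * Real.log s / s := by
  have he : Real.exp 1 ≤ 3 := by
    have := Real.exp_one_lt_d9; linarith
  have h1 : Real.log u / u ≤ Real.log s / s :=
    Real.log_div_self_antitoneOn (by simpa using he.trans hs)
      (by simpa using he.trans (hs.trans hsu)) hsu
  calc 2 * Real.log u / u = 2 * (Real.log u / u) := by ring
    _ ≤ 2 * (Real.log s / s) := by linarith
    _ = 2 * Real.log s / s := by ring

private lemma mvt_bounds {t : ℝ} (ht : 3 ≤ t) :
    2 * Real.log (t + 1) / (t + 1) ≤ Real.log (t + 1) ^ 2 - Real.log t ^ 2 ∧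
      Real.log (t + 1) ^ 2 - Real.log t ^ 2 ≤ 2 * Real.log t / t := by
  have hlt : t < t + 1 := by linarith
  have hderiv : ∀ x ∈ Set.Ioo t (t + 1),
      HasDerivAt (fun s => Real.log s ^ 2) (2 * Real.log x / x) x := by
    intro x hx
    have hx0 : x ≠ 0 := by have := hx.1; intro h; rw [h] at this; linarith
    have h := (Real.hasDerivAt_log hx0).fun_pow 2
    refine h.congr_deriv ?_
    norm_num
    ring
  have hcont : ContinuousOn (fun s => Real.log s ^ 2) (Set.Icc t (t + 1)) := by
    apply ContinuousOn.pow
    apply Real.continuousOn_log.mono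
    intro x hx
    simp only [Set.mem_compl_iff, Set.mem_singleton_iff]
    have := hx.1; intro h; rw [h] at this; linarith
  obtain ⟨c, hc, hceq⟩ := exists_hasDerivAt_eq_slope (fun s => Real.log s ^ 2)
    (fun x => 2 * Real.log x / x) hlt hcont hderiv
  have hdiff : Real.log (t + 1) ^ 2 - Real.log t ^ 2 = 2 * Real.log c / c := by
    rw [hceq]; simp
  constructor
  · rw [hdiff]
    exact lds_anti (by linarith [hc.1]) hc.2.le
  · rw [hdiff]
    exact lds_anti ht hc.1.le

set_option maxHeartbeats 1000000 in
/-- γ₂ + γ₂′ = π²/3 − 1. -/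
theorem gamma_two_add_gamma_two_prime_eq_pi_sq (γ₂ γ₂' : ℝ)
    (hγ₂ : γ₂ = ∑' x : ℕ,
      ((1 / ((x : ℝ) + 1) ^ 2 + 2 * Real.log ((x : ℝ) + 1) / ((x : ℝ) + 1)) -
        Real.log (((x : ℝ) + 1) * ((x : ℝ) + 2)) *
          Real.log (((x : ℝ) + 2) / ((x : ℝ) + 1))))
    (hγ₂' : γ₂' = ∑' x : ℕ,
      (Real.log (((x : ℝ) + 2) * ((x : ℝ) + 1)) *
          Real.log (((x : ℝ) + 2) / ((x : ℝ) + 1)) -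
        (2 * Real.log ((x : ℝ) + 2) / ((x : ℝ) + 2) - 1 / ((x : ℝ) + 2) ^ 2))) :
    γ₂ + γ₂' = Real.pi ^ 2 / 3 - 1 := by
  set a : ℕ → ℝ := fun x =>
      ((1 / ((x : ℝ) + 1) ^ 2 + 2 * Real.log ((x : ℝ) + 1) / ((x : ℝ) + 1)) -
        Real.log (((x : ℝ) + 1) * ((x : ℝ) + 2)) *
          Real.log (((x : ℝ) + 2) / ((x : ℝ) + 1))) with ha_def
  set b : ℕ → ℝ := fun x =>
      (Real.log (((x : ℝ) + 2) * ((x : ℝ) + 1)) *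
          Real.log (((x : ℝ) + 2) / ((x : ℝ) + 1)) -
        (2 * Real.log ((x : ℝ) + 2) / ((x : ℝ) + 2) - 1 / ((x : ℝ) + 2) ^ 2)) with hb_def
  set H : ℕ → ℝ := fun x => 2 * Real.log ((x : ℝ) + 1) / ((x : ℝ) + 1) with hH_def
  -- log product rewrite
  have hL : ∀ x : ℕ, Real.log (((x : ℝ) + 1) * ((x : ℝ) + 2)) *
      Real.log (((x : ℝ) + 2) / ((x : ℝ) + 1)) =
      Real.log ((x : ℝ) + 2) ^ 2 - Real.log ((x : ℝ) + 1) ^ 2 := by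
    intro x
    have h1 : ((x : ℝ) + 1) ≠ 0 := by positivity
    have h2 : ((x : ℝ) + 2) ≠ 0 := by positivity
    rw [Real.log_mul h1 h2, Real.log_div h2 h1]
    ring
  have hL' : ∀ x : ℕ, Real.log (((x : ℝ) + 2) * ((x : ℝ) + 1)) *
      Real.log (((x : ℝ) + 2) / ((x : ℝ) + 1)) =
      Real.log ((x : ℝ) + 2) ^ 2 - Real.log ((x : ℝ) + 1) ^ 2 := by
    intro x
    rw [mul_comm ((x : ℝ) + 2) ((x : ℝ) + 1)]
    exact hL x
  -- expressions for a, b via H and log squares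
  have haH : ∀ x : ℕ, a x = 1 / ((x : ℝ) + 1) ^ 2 + H x -
      (Real.log ((x : ℝ) + 2) ^ 2 - Real.log ((x : ℝ) + 1) ^ 2) := by
    intro x; simp only [ha_def, hH_def, hL x]
  have hbH : ∀ x : ℕ, b x = (Real.log ((x : ℝ) + 2) ^ 2 - Real.log ((x : ℝ) + 1) ^ 2)
      - H (x + 1) + 1 / ((x : ℝ) + 2) ^ 2 := by
    intro x; simp only [hb_def, hH_def, hL' x]; push_cast; ring
  -- MVT bounds at t = x+3 for shifted indices
  have hmvt : ∀ x : ℕ, H (x + 3) ≤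
      Real.log ((x : ℝ) + 4) ^ 2 - Real.log ((x : ℝ) + 3) ^ 2 ∧
      Real.log ((x : ℝ) + 4) ^ 2 - Real.log ((x : ℝ) + 3) ^ 2 ≤ H (x + 2) := by
    intro x
    have h := mvt_bounds (t := (x : ℝ) + 3) (by have := x.cast_nonneg (α := ℝ); linarith)
    obtain ⟨h1, h2⟩ := h
    constructor
    · simp only [hH_def]; push_cast
      ring_nf at h1 ⊢
      linarith
    · simp only [hH_def]; push_cast
      ring_nf at h2 ⊢
      linarith
  -- telescope tail summable
  have hTnonneg : ∀ x : ℕ, 0 ≤ H (x + 2) - H (x + 3) := by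
    intro x
    have h := lds_anti (s := (x : ℝ) + 3) (u := (x : ℝ) + 4)
      (by have := x.cast_nonneg (α := ℝ); linarith) (by linarith)
    have : H (x + 3) ≤ H (x + 2) := by
      simp only [hH_def]; push_cast
      ring_nf at h ⊢
      linarith
    linarith
  have hHnonneg : ∀ n : ℕ, 0 ≤ H n := by
    intro n
    simp only [hH_def]
    have h1 : (0:ℝ) ≤ Real.log ((n : ℝ) + 1) :=
      Real.log_nonneg (by have := n.cast_nonneg (α := ℝ); linarith)
    positivity
  have hT : Summable (fun x : ℕ => H (x + 2) - H (x + 3)) := by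
    apply summable_of_sum_range_le hTnonneg (c := H 2)
    intro n
    have : ∑ i ∈ range n, (H (i + 2) - H (i + 3)) = H 2 - H (n + 2) := by
      have := Finset.sum_range_sub' (f := fun i => H (i + 2)) n
      simpa using this
    rw [this]
    linarith [hHnonneg (n + 2)]
  have hsq3 : Summable (fun x : ℕ => 1 / ((x : ℝ) + 3) ^ 2) := by
    have h := Real.summable_one_div_nat_pow.mpr (show 1 < 2 by norm_num)
    have h2 := (summable_nat_add_iff 3).mpr h
    apply h2.congr
    intro n; push_cast; ring
  -- summability of a
  have ha : Summable a := by
    rw [← summable_nat_add_iff 2]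
    have hax : ∀ x : ℕ, a (x + 2) = 1 / ((x : ℝ) + 3) ^ 2 + H (x + 2) -
        (Real.log ((x : ℝ) + 4) ^ 2 - Real.log ((x : ℝ) + 3) ^ 2) := by
      intro x
      rw [haH (x + 2)]
      push_cast
      ring_nf
    apply Summable.of_nonneg_of_le (f := fun x : ℕ => 1 / ((x : ℝ) + 3) ^ 2 +
      (H (x + 2) - H (x + 3)))
    · intro x
      have h := (hmvt x).2
      rw [hax x]
      have : (0:ℝ) ≤ 1 / ((x : ℝ) + 3) ^ 2 := by positivity
      linarith
    · intro x
      have h := (hmvt x).1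
      rw [hax x]
      linarith
    · exact hsq3.add hT
  -- summability of b
  have hsq4 : Summable (fun x : ℕ => 1 / ((x : ℝ) + 4) ^ 2) := by
    have h := Real.summable_one_div_nat_pow.mpr (show 1 < 2 by norm_num)
    have h2 := (summable_nat_add_iff 4).mpr h
    apply h2.congr
    intro n; push_cast; ring
  have hb : Summable b := by
    rw [← summable_nat_add_iff 2]
    have hbx : ∀ x : ℕ, b (x + 2) = (Real.log ((x : ℝ) + 4) ^ 2 -
        Real.log ((x : ℝ) + 3) ^ 2) - H (x + 3) + 1 / ((x : ℝ) + 4) ^ 2 := by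
      intro x
      rw [hbH (x + 2)]
      push_cast
      ring_nf
    apply Summable.of_nonneg_of_le (f := fun x : ℕ => (H (x + 2) - H (x + 3)) +
      1 / ((x : ℝ) + 4) ^ 2)
    · intro x
      have h := (hmvt x).1
      rw [hbx x]
      have : (0:ℝ) ≤ 1 / ((x : ℝ) + 4) ^ 2 := by positivity
      linarith
    · intro x
      have h := (hmvt x).2
      rw [hbx x]
      linarith
    · exact hT.add hsq4
  -- pointwise sum
  have hab : ∀ x : ℕ, a x + b x = 1 / ((x : ℝ) + 1) ^ 2 + 1 / ((x : ℝ) + 2) ^ 2 +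
      (H x - H (x + 1)) := by
    intro x
    rw [haH x, hbH x]; ring
  -- Basel sums
  have hzeta := hasSum_zeta_two
  have hsum1 : HasSum (fun x : ℕ => 1 / ((x : ℝ) + 1) ^ 2) (π ^ 2 / 6) := by
    have h := (hasSum_nat_add_iff' (f := fun n : ℕ => (1:ℝ) / (n : ℝ) ^ 2) 1).mpr hzeta
    have heq : (fun n : ℕ => (1:ℝ) / ((n + 1 : ℕ) : ℝ) ^ 2) =
        fun n : ℕ => 1 / ((n : ℝ) + 1) ^ 2 := by
      funext n; push_cast; ring
    rw [heq] at h
    simp only [Finset.range_one, Finset.sum_singleton, Nat.cast_zero] at h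
    norm_num at h
    simpa [one_div] using h
  have hsum2 : HasSum (fun x : ℕ => 1 / ((x : ℝ) + 2) ^ 2) (π ^ 2 / 6 - 1) := by
    have h := (hasSum_nat_add_iff' (f := fun n : ℕ => (1:ℝ) / (n : ℝ) ^ 2) 2).mpr hzeta
    have heq : (fun n : ℕ => (1:ℝ) / ((n + 2 : ℕ) : ℝ) ^ 2) =
        fun n : ℕ => 1 / ((n : ℝ) + 2) ^ 2 := by
      funext n; push_cast; ring
    rw [heq] at h
    have hrange : ∑ i ∈ Finset.range 2, (1:ℝ) / (i : ℝ) ^ 2 = 1 := by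
      rw [Finset.sum_range_succ, Finset.sum_range_one]
      norm_num
    rw [hrange] at h
    exact h
  -- H tends to zero
  have hHtend : Tendsto H atTop (𝓝 0) := by
    have h1 : Tendsto (fun x : ℝ => Real.log x / x) atTop (𝓝 0) :=
      Real.isLittleO_log_id_atTop.tendsto_div_nhds_zero
    have h2 : Tendsto (fun n : ℕ => (n : ℝ) + 1) atTop atTop :=
      tendsto_atTop_add_const_right _ 1 tendsto_natCast_atTop_atTop
    have h3 := (h1.comp h2).const_mul (2 : ℝ)
    simp only [mul_zero] at h3
    apply h3.congr
    intro n
    simp only [hH_def, Function.comp]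
    ring
  have hTel : Summable (fun x : ℕ => H x - H (x + 1)) := by
    have hs := ha.add hb
    have h4 : Summable (fun x : ℕ => (a x + b x) - (1 / ((x : ℝ) + 1) ^ 2 +
        1 / ((x : ℝ) + 2) ^ 2)) := hs.sub (hsum1.summable.add hsum2.summable)
    apply h4.congr
    intro x
    rw [hab x]; ring
  have hsum3 : HasSum (fun x : ℕ => H x - H (x + 1)) 0 := by
    rw [hTel.hasSum_iff_tendsto_nat]
    have hps : ∀ n : ℕ, ∑ i ∈ range n, (H i - H (i + 1)) = H 0 - H n :=
      fun n => Finset.sum_range_sub' H n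
    have hH0 : H 0 = 0 := by simp [hH_def]
    have htd : Tendsto (fun n : ℕ => H 0 - H n) atTop (𝓝 (H 0 - 0)) :=
      tendsto_const_nhds.sub hHtend
    rw [hH0, sub_zero] at htd
    simp only [hps, hH0]
    simpa using htd
  -- combine
  have hfinal : HasSum (fun x : ℕ => a x + b x) (π ^ 2 / 6 + (π ^ 2 / 6 - 1) + 0) := by
    have h := (hsum1.add hsum2).add hsum3
    have heq : (fun x : ℕ => 1 / ((x : ℝ) + 1) ^ 2 + 1 / ((x : ℝ) + 2) ^ 2 +
        (H x - H (x + 1))) = fun x : ℕ => a x + b x := by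
      funext x; rw [hab x]
    rwa [heq] at h
  rw [hγ₂, hγ₂']
  calc (∑' x, a x) + (∑' x, b x) = ∑' x, (a x + b x) := (Summable.tsum_add ha hb).symm
    _ = π ^ 2 / 6 + (π ^ 2 / 6 - 1) + 0 := hfinal.tsum_eq
    _ = π ^ 2 / 3 - 1 := by ring
end

section
/- The series ∑_{x=2}^∞ [ ((ln x)³ − (ln(x−1))³) − (3·(ln x)² / x − 3·ln x / x² + 1/x³) ] converges (its sum is denoted γ₃′ ≈ 2.6396589…). -/
open Real

set_option maxHeartbeats 1000000 in
private lemma gamma3_term_bound (n : ℕ) :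
    |((Real.log ((n : ℝ) + 2)) ^ 3 - (Real.log ((n : ℝ) + 1)) ^ 3) -
        (3 * (Real.log ((n : ℝ) + 2)) ^ 2 / ((n : ℝ) + 2) -
          3 * Real.log ((n : ℝ) + 2) / ((n : ℝ) + 2) ^ 2 + 1 / ((n : ℝ) + 2) ^ 3)|
      ≤ 224 * ((((n:ℝ)+1) ^ ((3:ℝ)/2))⁻¹) := by
  have hcast : (0:ℝ) ≤ (n:ℝ) := Nat.cast_nonneg n
  set m : ℝ := (n:ℝ) + 2 with hm
  have hm2 : (2:ℝ) ≤ m := by rw [hm]; linarith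
  have hm0 : (0:ℝ) < m := by linarith
  have hm1 : (0:ℝ) < m - 1 := by linarith
  have hm1' : (1:ℝ) ≤ m - 1 := by linarith
  have hmeq : (n:ℝ) + 1 = m - 1 := by rw [hm]; ring
  rw [hmeq]
  set L := Real.log m with hL
  set M := Real.log (m - 1) with hMdef
  have hM0 : 0 ≤ M := Real.log_nonneg hm1'
  set δ : ℝ := L - M - 1/m with hδ
  clear_value m L M δ
  -- bound on δ
  have hx : |1/m| < 1 := by
    rw [abs_of_pos (by positivity)]
    rw [div_lt_one hm0]; linarith
  have hlog1 : Real.log (1 - 1/m) = M - L := by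
    have h : (1 : ℝ) - 1/m = (m-1)/m := by field_simp
    rw [h, Real.log_div (ne_of_gt hm1) (ne_of_gt hm0), ← hMdef, ← hL]
  have hδbound : |δ| ≤ 2 / m^2 := by
    have h := Real.abs_log_sub_add_sum_range_le hx 1
    simp only [Finset.sum_range_one, pow_one, Nat.cast_zero, zero_add, div_one] at h
    rw [hlog1, abs_of_pos (show (0:ℝ) < 1/m by positivity)] at h
    have hδeq : |δ| = |1/m + (M - L)| := by
      rw [hδ, ← abs_neg]; congr 1; ring
    rw [hδeq]
    have hden : (1:ℝ)/2 ≤ 1 - 1/m := by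
      have : 1/m ≤ 1/2 := by
        rw [div_le_div_iff₀ hm0 (by norm_num)]; linarith
      linarith
    calc |1/m + (M - L)| ≤ (1/m)^2 / (1 - 1/m) := h
      _ ≤ (1/m)^2 / (1/2) :=
          div_le_div_of_nonneg_left (by positivity) (by norm_num) hden
      _ = 2 / m^2 := by field_simp
  have hδ1 : |δ| ≤ 1 := by
    have : 2 / m^2 ≤ 1 := by
      rw [div_le_one (by positivity)]; nlinarith
    linarith
  -- rewrite the term
  have hterm : (L ^ 3 - M ^ 3) - (3 * L ^ 2 / m - 3 * L / m ^ 2 + 1 / m ^ 3)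
      = 3*M^2*δ + 3*M*δ^2 + δ^3 := by
    have hLeq : L = M + δ + 1/m := by rw [hδ]; ring
    rw [hLeq]
    field_simp
    ring
  rw [hterm]
  -- |δ|-power bounds
  have hd2 : δ^2 ≤ |δ| := by
    rw [← sq_abs]
    nlinarith [mul_le_mul_of_nonneg_right hδ1 (abs_nonneg δ)]
  have hdsq1 : |δ|^2 ≤ 1 := by
    nlinarith [mul_le_mul_of_nonneg_right hδ1 (abs_nonneg δ)]
  have hd3 : |δ^3| ≤ |δ| := by
    rw [abs_pow]
    calc |δ|^3 = |δ|^2 * |δ| := by ring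
      _ ≤ 1 * |δ| := mul_le_mul_of_nonneg_right hdsq1 (abs_nonneg δ)
      _ = |δ| := one_mul _
  have e1 : |3*M^2*δ| = 3*M^2*|δ| := by
    rw [abs_mul, abs_of_nonneg (show (0:ℝ) ≤ 3*M^2 by positivity)]
  have e2 : |3*M*δ^2| = 3*M*δ^2 := abs_of_nonneg (by positivity)
  have h12 : |3*M^2*δ + 3*M*δ^2 + δ^3| ≤ (3*M^2 + 3*M + 1) * |δ| := by
    calc |3*M^2*δ + 3*M*δ^2 + δ^3| ≤ |3*M^2*δ + 3*M*δ^2| + |δ^3| := abs_add_le _ _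
      _ ≤ |3*M^2*δ| + |3*M*δ^2| + |δ^3| := by
          linarith [abs_add_le (3*M^2*δ) (3*M*δ^2)]
      _ = 3*M^2*|δ| + 3*M*δ^2 + |δ^3| := by rw [e1, e2]
      _ ≤ (3*M^2 + 3*M + 1) * |δ| := by
          linarith [mul_le_mul_of_nonneg_left hd2 hM0, hd3]
  -- log bound
  have hr : (0:ℝ) < (m-1) ^ ((1:ℝ)/4) := Real.rpow_pos_of_pos hm1 _
  have hr1 : (1:ℝ) ≤ (m-1) ^ ((1:ℝ)/4) := Real.one_le_rpow hm1' (by norm_num)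
  have hMle : M ≤ 4 * ((m-1) ^ ((1:ℝ)/4) - 1) := by
    have h4l : Real.log (m-1) = 4 * Real.log ((m-1) ^ ((1:ℝ)/4)) := by
      rw [Real.log_rpow hm1]; ring
    rw [hMdef, h4l]
    have := Real.log_le_sub_one_of_pos hr
    linarith
  have hsq : ((m-1) ^ ((1:ℝ)/4))^2 = (m-1) ^ ((1:ℝ)/2) := by
    rw [← Real.rpow_natCast ((m-1) ^ ((1:ℝ)/4)) 2, ← Real.rpow_mul (le_of_lt hm1)]
    norm_num
  have h4 : (M+1)^2 ≤ 16 * (m-1) ^ ((1:ℝ)/2) := by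
    rw [← hsq]
    set r := (m-1) ^ ((1:ℝ)/4) with hrdef
    clear_value r
    calc (M+1)^2 ≤ (4*r-3)^2 := pow_le_pow_left₀ (by linarith) (by linarith) 2
      _ = 16*r^2 - 24*r + 9 := by ring
      _ ≤ 16*r^2 := by linarith
  have h5 : (3*M^2 + 3*M + 1) * |δ| ≤ 14 * (M+1)^2 / m^2 := by
    have h3' : (3*M^2 + 3*M + 1) ≤ 7 * (M+1)^2 := by nlinarith [sq_nonneg M, hM0]
    calc (3*M^2 + 3*M + 1) * |δ| ≤ 7 * (M+1)^2 * |δ| :=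
          mul_le_mul_of_nonneg_right h3' (abs_nonneg δ)
      _ ≤ 7 * (M+1)^2 * (2 / m^2) :=
          mul_le_mul_of_nonneg_left hδbound (by positivity)
      _ = 14 * (M+1)^2 / m^2 := by ring
  have h6 : 14 * (M+1)^2 / m^2 ≤ 224 * (m-1) ^ ((1:ℝ)/2) / m^2 := by
    gcongr ?_ / (m^2)
    linarith [h4]
  have hpow : (m-1)^((1:ℝ)/2) * (m-1)^((3:ℝ)/2) = (m-1)^2 := by
    rw [← Real.rpow_add hm1]
    norm_num
  have h7 : 224 * (m-1) ^ ((1:ℝ)/2) / m^2 ≤ 224 * ((m-1) ^ ((3:ℝ)/2))⁻¹ := by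
    rw [inv_eq_one_div, mul_one_div, div_le_div_iff₀ (by positivity)
      (Real.rpow_pos_of_pos hm1 _)]
    calc 224 * (m-1)^((1:ℝ)/2) * (m-1)^((3:ℝ)/2) = 224 * (m-1)^2 := by
          rw [mul_assoc, hpow]
      _ ≤ 224 * m^2 := by nlinarith [hm1, hm0]
  calc |3*M^2*δ + 3*M*δ^2 + δ^3| ≤ (3*M^2 + 3*M + 1) * |δ| := h12
    _ ≤ 14 * (M+1)^2 / m^2 := h5
    _ ≤ 224 * (m-1) ^ ((1:ℝ)/2) / m^2 := h6
    _ ≤ 224 * ((m-1) ^ ((3:ℝ)/2))⁻¹ := h7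

/-- The series ∑_{x=2}^∞ [((ln x)³ − (ln(x−1))³) − (3 (ln x)²/x − 3 ln x / x² + 1/x³)]
converges; its sum is γ₃′. -/
theorem summable_gamma_three_prime :
    Summable (fun x : ℕ =>
      ((Real.log ((x : ℝ) + 2)) ^ 3 - (Real.log ((x : ℝ) + 1)) ^ 3) -
        (3 * (Real.log ((x : ℝ) + 2)) ^ 2 / ((x : ℝ) + 2) -
          3 * Real.log ((x : ℝ) + 2) / ((x : ℝ) + 2) ^ 2 + 1 / ((x : ℝ) + 2) ^ 3)) := by
  have hsum : Summable (fun n : ℕ => 224 * ((((n:ℝ)+1) ^ ((3:ℝ)/2))⁻¹)) := by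
    have h1 : Summable (fun n : ℕ => (((n:ℝ)) ^ ((3:ℝ)/2))⁻¹) :=
      Real.summable_nat_rpow_inv.mpr (by norm_num)
    have h2 : Summable (fun n : ℕ => ((((n + 1 : ℕ) : ℝ)) ^ ((3:ℝ)/2))⁻¹) :=
      (summable_nat_add_iff 1).mpr h1
    have h3 : Summable (fun n : ℕ => ((((n:ℝ)+1)) ^ ((3:ℝ)/2))⁻¹) := by
      convert h2 using 2 with n
      push_cast
      ring_nf
    exact h3.mul_left 224
  apply Summable.of_abs
  apply Summable.of_nonneg_of_le (fun n => abs_nonneg _) _ hsum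
  intro n
  exact gamma3_term_bound n
end
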